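/- For every complex Banach space X with open unit ball B and every f ∈ A_u(B), the cluster set of f at 0 equals the intersection, over all closed finite-codimensional subspaces Y of X, of the images of the fibers at 0 under the Gelfand transform of the restriction: Cl_B(f, 0) = ⋂_{Y ⊆ X, dim(X/Y) < ∞} (f|_{B_Y})^(M₀(B_Y)). -/

import Mathlib

open Metric Filter Topology

namespace ClusterValue

variable (X : Type*) [NormedAddCommGroup X] [NormedSpace ℂ X]

/-- Membership in `A_u(B)`: analytic on the open unit ball, bounded there,
and uniformly continuous there. -/
def MemAu (f : X → ℂ) : Prop :=
  AnalyticOn ℂ f (ball (0 : X) 1) ∧ (∃ C : ℝ, ∀ x ∈ ball (0 : X) 1, ‖f x‖ ≤ C) ∧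
    UniformContinuousOn f (ball (0 : X) 1)

/-- Membership in `H^∞(B)`: analytic on the open unit ball and bounded there. -/
def MemHinf (f : X → ℂ) : Prop :=
  AnalyticOn ℂ f (ball (0 : X) 1) ∧ (∃ C : ℝ, ∀ x ∈ ball (0 : X) 1, ‖f x‖ ≤ C)

/-- A character (nonzero continuous multiplicative linear functional) of the algebra
of functions on the open unit ball of `X` determined by the membership predicate `Mem`.
Functions are identified when they agree on the ball. -/
structure Character (Mem : (X → ℂ) → Prop) : Type _ where
  toFun : (X → ℂ) → ℂ
  congr' : ∀ f g, Mem f → Mem g → (∀ x ∈ ball (0 : X) 1, f x = g x) → toFun f = toFun g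
  map_add' : ∀ f g, Mem f → Mem g → toFun (f + g) = toFun f + toFun g
  map_mul' : ∀ f g, Mem f → Mem g → toFun (f * g) = toFun f * toFun g
  map_smul' : ∀ (c : ℂ) (f), Mem f → toFun (c • f) = c * toFun f
  map_one' : toFun 1 = 1
  continuous' : ∃ C : ℝ, ∀ (f : X → ℂ) (M : ℝ), Mem f →
    (∀ x ∈ ball (0 : X) 1, ‖f x‖ ≤ M) → ‖toFun f‖ ≤ C * M

variable {X}

/-- The fiber over `0`: characters annihilating all continuous linear functionals. -/
def Character.inFiberZero {Mem : (X → ℂ) → Prop} (τ : Character X Mem) : Prop :=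
  ∀ φ : X →L[ℂ] ℂ, τ.toFun ⇑φ = 0

/-- The fiber over `x'' ∈ X**`. -/
def Character.inFiber {Mem : (X → ℂ) → Prop} (τ : Character X Mem)
    (x'' : (X →L[ℂ] ℂ) →L[ℂ] ℂ) : Prop :=
  ∀ φ : X →L[ℂ] ℂ, τ.toFun ⇑φ = x'' φ

variable (X)

/-- The cluster set of `f` at `0`: limits of `f` along weakly null nets (filters) in the ball. -/
def clusterSetZero (f : X → ℂ) : Set ℂ :=
  {z | ∃ l : Filter X, l.NeBot ∧ l ≤ 𝓟 (ball (0 : X) 1) ∧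
    (∀ φ : X →L[ℂ] ℂ, Tendsto (fun x => φ x) l (𝓝 0)) ∧ Tendsto f l (𝓝 z)}

/-- The cluster set of `f` at `x'' ∈ X**`: limits of `f` along nets in the ball converging
weak-star to `x''`. -/
def clusterSet (f : X → ℂ) (x'' : (X →L[ℂ] ℂ) →L[ℂ] ℂ) : Set ℂ :=
  {z | ∃ l : Filter X, l.NeBot ∧ l ≤ 𝓟 (ball (0 : X) 1) ∧
    (∀ φ : X →L[ℂ] ℂ, Tendsto (fun x => φ x) l (𝓝 (x'' φ))) ∧ Tendsto f l (𝓝 z)}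

/-- A finite rank (bounded linear) operator. -/
def FiniteRank (S : X →L[ℂ] X) : Prop :=
  FiniteDimensional ℂ ↥(LinearMap.range (S : X →ₗ[ℂ] X))

/-- Finite type polynomials: the subalgebra of functions generated by the
continuous linear functionals (and constants). -/
def IsFiniteTypePoly (p : X → ℂ) : Prop :=
  p ∈ Algebra.adjoin ℂ (Set.range fun φ : X →L[ℂ] ℂ => (⇑φ : X → ℂ))

/-- Membership in `A(B)`: uniform limits on the ball of finite type polynomials. -/
def MemA (f : X → ℂ) : Prop :=
  ∀ ε > (0 : ℝ), ∃ p : X → ℂ, IsFiniteTypePoly X p ∧ ∀ x ∈ ball (0 : X) 1, ‖f x - p x‖ ≤ ε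

/-- A continuous polynomial: a finite sum of (diagonals of) continuous multilinear maps. -/
def IsContPoly (p : X → ℂ) : Prop :=
  ∃ (N : ℕ) (M : ∀ k : ℕ, ContinuousMultilinearMap ℂ (fun _ : Fin k => X) ℂ),
    ∀ x, p x = ∑ k ∈ Finset.range N, M k (fun _ => x)

end ClusterValue

namespace CVAux

open ClusterValue

variable {X : Type*} [NormedAddCommGroup X] [NormedSpace ℂ X]

lemma memAu_const (c : ℂ) : MemAu X (fun _ => c) :=
  ⟨analyticOn_const, ⟨‖c‖, fun _ _ => le_rfl⟩,
    (uniformContinuous_const (b := c)).mono_left inf_le_left⟩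

lemma memAu_sub_const {f : X → ℂ} (hf : MemAu X f) (c : ℂ) :
    MemAu X (fun x => f x - c) := by
  obtain ⟨ha, ⟨C, hC⟩, hu⟩ := hf
  refine ⟨ha.sub analyticOn_const, ⟨C + ‖c‖, fun x hx => ?_⟩, ?_⟩
  · calc ‖f x - c‖ ≤ ‖f x‖ + ‖c‖ := norm_sub_le _ _
      _ ≤ C + ‖c‖ := by linarith [hC x hx]
  · rw [Metric.uniformContinuousOn_iff] at hu ⊢
    intro ε hε
    obtain ⟨δ, hδ, H⟩ := hu ε hε
    refine ⟨δ, hδ, fun x hx y hy hxy => ?_⟩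
    simpa [dist_eq_norm, sub_sub_sub_cancel_right] using H x hx y hy hxy

lemma memAu_mul {f g : X → ℂ} (hf : MemAu X f) (hg : MemAu X g) :
    MemAu X (f * g) := by
  obtain ⟨ha, ⟨C, hC⟩, hu⟩ := hf
  obtain ⟨ha', ⟨C', hC'⟩, hu'⟩ := hg
  set Cf := max C 0 with hCf
  set Cg := max C' 0 with hCg
  have hbf : ∀ x ∈ ball (0 : X) 1, ‖f x‖ ≤ Cf := fun x hx => (hC x hx).trans (le_max_left _ _)
  have hbg : ∀ x ∈ ball (0 : X) 1, ‖g x‖ ≤ Cg := fun x hx => (hC' x hx).trans (le_max_left _ _)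
  have hCf0 : (0:ℝ) ≤ Cf := le_max_right _ _
  have hCg0 : (0:ℝ) ≤ Cg := le_max_right _ _
  refine ⟨ha.mul ha', ⟨Cf * Cg, fun x hx => ?_⟩, ?_⟩
  · calc ‖(f * g) x‖ = ‖f x‖ * ‖g x‖ := norm_mul _ _
      _ ≤ Cf * Cg := mul_le_mul (hbf x hx) (hbg x hx) (norm_nonneg _) hCf0
  · rw [Metric.uniformContinuousOn_iff] at hu hu' ⊢
    intro ε hε
    obtain ⟨δ₁, hδ₁, H₁⟩ := hu (ε / (2 * (Cg + 1))) (by positivity)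
    obtain ⟨δ₂, hδ₂, H₂⟩ := hu' (ε / (2 * (Cf + 1))) (by positivity)
    refine ⟨min δ₁ δ₂, lt_min hδ₁ hδ₂, fun x hx y hy hxy => ?_⟩
    have h1 := H₁ x hx y hy (hxy.trans_le (min_le_left _ _))
    have h2 := H₂ x hx y hy (hxy.trans_le (min_le_right _ _))
    have key : dist ((f*g) x) ((f*g) y) ≤ dist (f x) (f y) * ‖g x‖ + ‖f y‖ * dist (g x) (g y) := by
      simp only [Pi.mul_apply, dist_eq_norm]
      calc ‖f x * g x - f y * g y‖ = ‖(f x - f y) * g x + f y * (g x - g y)‖ := by ring_nf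
        _ ≤ ‖(f x - f y) * g x‖ + ‖f y * (g x - g y)‖ := norm_add_le _ _
        _ = ‖f x - f y‖ * ‖g x‖ + ‖f y‖ * ‖g x - g y‖ := by rw [norm_mul, norm_mul]
    have e1 : dist (f x) (f y) * ‖g x‖ ≤ (ε / (2 * (Cg + 1))) * Cg :=
      mul_le_mul h1.le (hbg x hx) (norm_nonneg _) (by positivity)
    have e2 : ‖f y‖ * dist (g x) (g y) ≤ Cf * (ε / (2 * (Cf + 1))) :=
      mul_le_mul (hbf y hy) h2.le dist_nonneg hCf0
    have e3 : (ε / (2 * (Cg + 1))) * Cg < ε / 2 := by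
      rw [div_mul_eq_mul_div, div_lt_div_iff₀ (by positivity) (by norm_num)]
      nlinarith
    have e4 : Cf * (ε / (2 * (Cf + 1))) < ε / 2 := by
      rw [mul_div_assoc', div_lt_div_iff₀ (by positivity) (by norm_num)]
      nlinarith
    linarith [key]

lemma memAu_inv {f : X → ℂ} (hf : MemAu X f) {δ : ℝ} (hδ : 0 < δ)
    (hlow : ∀ x ∈ ball (0 : X) 1, δ ≤ ‖f x‖) : MemAu X (fun x => (f x)⁻¹) := by
  obtain ⟨ha, ⟨C, hC⟩, hu⟩ := hf
  have hne : ∀ x ∈ ball (0 : X) 1, f x ≠ 0 := fun x hx =>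
    norm_pos_iff.mp (hδ.trans_le (hlow x hx))
  refine ⟨ha.inv hne, ⟨δ⁻¹, fun x hx => ?_⟩, ?_⟩
  · rw [norm_inv]
    exact inv_anti₀ hδ (hlow x hx)
  · rw [Metric.uniformContinuousOn_iff] at hu ⊢
    intro ε hε
    obtain ⟨δ₁, hδ₁, H⟩ := hu (ε * (δ * δ)) (by positivity)
    refine ⟨δ₁, hδ₁, fun x hx y hy hxy => ?_⟩
    have h1 := H x hx y hy hxy
    rw [dist_inv_inv₀ (hne x hx) (hne y hy)]
    have hpx : (0:ℝ) < ‖f x‖ := hδ.trans_le (hlow x hx)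
    have hpy : (0:ℝ) < ‖f y‖ := hδ.trans_le (hlow y hy)
    rw [div_lt_iff₀ (mul_pos hpx hpy)]
    calc dist (f x) (f y) < ε * (δ * δ) := h1
      _ ≤ ε * (‖f x‖ * ‖f y‖) := by
          have h2 := hlow x hx; have h3 := hlow y hy
          have : δ * δ ≤ ‖f x‖ * ‖f y‖ := mul_le_mul h2 h3 hδ.le (norm_nonneg _)
          exact mul_le_mul_of_nonneg_left this hε.le

lemma memAu_restrict (Y : Submodule ℂ X) {f : X → ℂ} (hf : MemAu X f) :
    MemAu Y (fun y => f ↑y) := by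
  obtain ⟨ha, ⟨C, hC⟩, hu⟩ := hf
  have hmaps : ∀ y : Y, y ∈ ball (0 : Y) 1 → (y : X) ∈ ball (0 : X) 1 := by
    intro y hy
    simpa [mem_ball_zero_iff] using mem_ball_zero_iff.mp hy
  refine ⟨?_, ⟨C, fun y hy => hC _ (hmaps y hy)⟩, ?_⟩
  · exact ha.comp ((Y.subtypeL.analyticOnNhd _).analyticOn) hmaps
  · rw [Metric.uniformContinuousOn_iff] at hu ⊢
    intro ε hε
    obtain ⟨δ, hδ, H⟩ := hu ε hε
    refine ⟨δ, hδ, fun x hx y hy hxy => ?_⟩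
    exact H x (hmaps x hx) y (hmaps y hy) (by simpa [Subtype.dist_eq] using hxy)


lemma char_mem_closure {g : X → ℂ} (hg : MemAu X g) (τ : Character X (MemAu X)) :
    τ.toFun g ∈ closure (g '' ball (0 : X) 1) := by
  by_contra hcl
  rw [Metric.mem_closure_iff] at hcl
  push_neg at hcl
  obtain ⟨ε, hε, hfar⟩ := hcl
  set lam := τ.toFun g with hlam
  have hlow : ∀ x ∈ ball (0 : X) 1, ε ≤ ‖g x - lam‖ := by
    intro x hx
    have := hfar (g x) ⟨x, hx, rfl⟩
    rwa [dist_eq_norm, ← norm_neg, neg_sub] at this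
  have hg' : MemAu X (fun x => g x - lam) := memAu_sub_const hg lam
  have hh : MemAu X (fun x => (g x - lam)⁻¹) := memAu_inv hg' hε hlow
  -- τ of (g - lam) is 0
  have hconst : MemAu X ((-lam) • (1 : X → ℂ)) := by
    have : ((-lam) • (1 : X → ℂ)) = fun _ => -lam := by funext x; simp
    rw [this]; exact memAu_const _
  have hsum : (fun x => g x - lam) = g + (-lam) • (1 : X → ℂ) := by
    funext x; simp [sub_eq_add_neg]
  have e0 : τ.toFun (fun x => g x - lam) = 0 := by
    rw [hsum, τ.map_add' g _ hg hconst, τ.map_smul' (-lam) 1 (by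
      have : (1 : X → ℂ) = fun _ => (1:ℂ) := rfl
      rw [this]; exact memAu_const 1), τ.map_one']
    simp [hlam]
  -- product is 1 on the ball
  have hprodmem : MemAu X ((fun x => (g x - lam)⁻¹) * (fun x => g x - lam)) :=
    memAu_mul hh hg'
  have e1 : τ.toFun ((fun x => (g x - lam)⁻¹) * (fun x => g x - lam)) = 1 := by
    have h1 : MemAu X (1 : X → ℂ) := by
      have : (1 : X → ℂ) = fun _ => (1:ℂ) := rfl
      rw [this]; exact memAu_const 1
    rw [τ.congr' _ 1 hprodmem h1 ?_, τ.map_one']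
    intro x hx
    have hne : g x - lam ≠ 0 := fun h => by
      have := hlow x hx; rw [h, norm_zero] at this; linarith
    simp [Pi.mul_apply, inv_mul_cancel₀ hne]
  rw [τ.map_mul' _ _ hh hg', e0, mul_zero] at e1
  exact one_ne_zero e1.symm


lemma exists_char (Y : Submodule ℂ X) (hc : IsClosed (Y : Set X))
    [FiniteDimensional ℂ (X ⧸ Y)]
    {f : X → ℂ} (hf : MemAu X f) {z : ℂ} {l : Filter X} (hne : l.NeBot)
    (hball : l ≤ 𝓟 (ball (0 : X) 1))
    (hweak : ∀ φ : X →L[ℂ] ℂ, Tendsto (fun x => φ x) l (𝓝 0))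
    (hfz : Tendsto f l (𝓝 z)) :
    ∃ τ : Character ↥Y (MemAu ↥Y), τ.inFiberZero ∧ τ.toFun (fun y => f ↑y) = z := by
  haveI := hc
  -- quotient map as a CLM
  let qc : X →L[ℂ] X ⧸ Y :=
    Y.mkQ.mkContinuous 1 (fun x => by simpa using Submodule.Quotient.norm_mk_le Y x)
  have hqc : ∀ x, qc x = Y.mkQ x := fun _ => rfl
  -- a linear section
  let b := Module.finBasis ℂ (X ⧸ Y)
  let σ : (X ⧸ Y) →ₗ[ℂ] X :=
    b.constr ℂ (fun i => Function.surjInv (Y.mkQ_surjective) (b i))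
  have hqσ : ∀ v, Y.mkQ (σ v) = v := by
    have h : Y.mkQ.comp σ = LinearMap.id := by
      apply b.ext
      intro i
      simp [σ, Module.Basis.constr_basis, Function.surjInv_eq]
    intro v
    have := LinearMap.congr_fun h v
    simpa using this
  let σc : (X ⧸ Y) →L[ℂ] X := σ.toContinuousLinearMap
  have hσc : ∀ v, σc v = σ v := fun _ => rfl
  -- projection onto Y
  have hmem : ∀ x : X, x - σc (qc x) ∈ Y := by
    intro x
    have h0 : Y.mkQ (x - σc (qc x)) = 0 := by
      rw [map_sub, hσc, hqσ, hqc, sub_self]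
    exact (Submodule.Quotient.mk_eq_zero Y).mp (by simpa [Submodule.mkQ_apply] using h0)
  let P : X →L[ℂ] X := ContinuousLinearMap.id ℂ X - σc.comp qc
  let π : X →L[ℂ] Y := P.codRestrict Y (fun x => hmem x)
  have hπval : ∀ x, (π x : X) = x - σc (qc x) := fun _ => rfl
  -- the quotient coordinates tend to zero
  have hq0 : Tendsto (fun x => qc x) l (𝓝 0) := by
    have hcoord : ∀ i, Tendsto (fun x => (b.repr (qc x)) i • b i) l (𝓝 0) := by
      intro i
      have hφ : Tendsto (fun x => ((b.coord i).toContinuousLinearMap.comp qc) x) l (𝓝 0) :=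
        hweak _
      have : Tendsto (fun x => (b.repr (qc x)) i) l (𝓝 0) := by
        refine hφ.congr (fun x => ?_)
        simp [Module.Basis.coord_apply]
      simpa using this.smul_const (b i)
    have hsum : Tendsto (fun x => ∑ i, (b.repr (qc x)) i • b i) l (𝓝 0) := by
      have := tendsto_finset_sum Finset.univ (fun i _ => hcoord i)
      simpa using this
    refine hsum.congr (fun x => ?_)
    exact b.sum_repr (qc x)
  have hs0 : Tendsto (fun x => σc (qc x)) l (𝓝 0) := by
    have := (σc.continuous.tendsto 0).comp hq0
    exact (by simpa using this : Tendsto (⇑σc ∘ fun x => qc x) l (𝓝 0))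
  have hn0 : Tendsto (fun x => ‖σc (qc x)‖) l (𝓝 0) := by
    simpa using hs0.norm
  -- scaling factor
  let c : X → ℂ := fun x => (((1 + ‖σc (qc x)‖ : ℝ) : ℂ))⁻¹
  have hpos : ∀ x, (0:ℝ) < 1 + ‖σc (qc x)‖ := fun x => by positivity
  have hc1 : Tendsto c l (𝓝 1) := by
    have h1 : Tendsto (fun x => (1 + ‖σc (qc x)‖ : ℝ)) l (𝓝 1) := by
      have := hn0.const_add (1:ℝ)
      simpa using this
    have h2 : Tendsto (fun x => ((1 + ‖σc (qc x)‖ : ℝ) : ℂ)) l (𝓝 ((1:ℝ):ℂ)) :=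
      (Complex.continuous_ofReal.tendsto _).comp h1
    have h3 := h2.inv₀ (by simp)
    have h4 : Tendsto (fun x => (1 + (‖σc (qc x)‖:ℂ))⁻¹) l (𝓝 1) := by simpa using h3
    refine h4.congr fun x => ?_
    show (1 + (‖σc (qc x)‖:ℂ))⁻¹ = (((1 + ‖σc (qc x)‖ : ℝ)):ℂ)⁻¹
    norm_cast
  have hcnorm : ∀ x, ‖c x‖ = (1 + ‖σc (qc x)‖)⁻¹ := by
    intro x
    rw [norm_inv, Complex.norm_real, Real.norm_eq_abs, abs_of_pos (hpos x)]
  let Φ : X → Y := fun x => c x • π x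
  have hΦcoe : ∀ x, ((Φ x : X)) = c x • (x - σc (qc x)) := by
    intro x
    simp [Φ, hπval]
  have hπnorm : ∀ x, ‖π x‖ ≤ ‖x‖ + ‖σc (qc x)‖ := by
    intro x
    have : ‖(π x : X)‖ ≤ ‖x‖ + ‖σc (qc x)‖ := by
      rw [hπval]; exact norm_sub_le _ _
    simpa using this
  have hΦball : ∀ x ∈ ball (0:X) 1, Φ x ∈ ball (0:Y) 1 := by
    intro x hx
    rw [mem_ball_zero_iff] at hx ⊢
    have : ‖Φ x‖ = ‖c x‖ * ‖π x‖ := norm_smul _ _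
    rw [this, hcnorm]
    calc (1 + ‖σc (qc x)‖)⁻¹ * ‖π x‖ ≤ (1 + ‖σc (qc x)‖)⁻¹ * (‖x‖ + ‖σc (qc x)‖) := by
          exact mul_le_mul_of_nonneg_left (hπnorm x) (by positivity)
      _ < (1 + ‖σc (qc x)‖)⁻¹ * (1 + ‖σc (qc x)‖) := by
          apply mul_lt_mul_of_pos_left _ (by positivity)
          linarith
      _ = 1 := inv_mul_cancel₀ (ne_of_gt (hpos x))
  have hev : ∀ᶠ x in l, x ∈ ball (0:X) 1 := le_principal_iff.mp hball
  -- Φ x approaches x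
  have hΦx : Tendsto (fun x => ((Φ x : X)) - x) l (𝓝 0) := by
    have heq : ∀ x, ((Φ x : X)) - x = (c x - 1) • x + (-(c x • σc (qc x))) := by
      intro x
      rw [hΦcoe]
      rw [smul_sub, sub_smul, one_smul]
      abel
    have h1 : Tendsto (fun x => (c x - 1) • x) l (𝓝 0) := by
      apply squeeze_zero_norm' (a := fun x => ‖c x - 1‖)
      · filter_upwards [hev] with x hx
        rw [norm_smul]
        rw [mem_ball_zero_iff] at hx
        nlinarith [norm_nonneg (c x - 1), norm_nonneg x]
      · have : Tendsto (fun x => c x - 1) l (𝓝 0) := by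
          simpa using hc1.sub_const 1
        simpa using this.norm
    have h2 : Tendsto (fun x => -(c x • σc (qc x))) l (𝓝 0) := by
      have := hc1.smul hs0
      simp only [smul_zero] at this
      simpa using this.neg
    have := h1.add h2
    simp only [add_zero] at this
    exact this.congr (fun x => (heq x).symm)
  -- the ultrafilter
  obtain ⟨u, hu⟩ := Filter.exists_ultrafilter_le l
  have hevu : ∀ᶠ x in (u : Filter X), x ∈ ball (0:X) 1 := hu hev
  let G : (Y → ℂ) → ℂ := fun g => limUnder (u : Filter X) (fun x => g (Φ x))
  have keyA : ∀ (g : Y → ℂ) (M : ℝ), (∀ y ∈ ball (0:Y) 1, ‖g y‖ ≤ M) →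
      Tendsto (fun x => g (Φ x)) (u : Filter X) (𝓝 (G g)) := by
    intro g M hM
    have hM0 : (0:ℝ) ≤ M := le_trans (norm_nonneg _) (hM 0 (mem_ball_self one_pos))
    have hK : ∀ᶠ x in (u : Filter X), g (Φ x) ∈ closedBall (0:ℂ) M := by
      filter_upwards [hevu] with x hx
      rw [mem_closedBall_zero_iff]
      exact hM _ (hΦball x hx)
    have hcpt : IsCompact (closedBall (0:ℂ) M) := isCompact_closedBall _ _
    obtain ⟨w, _, hw⟩ := hcpt.ultrafilter_le_nhds (u.map (fun x => g (Φ x)))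
      (le_principal_iff.mpr hK)
    exact tendsto_nhds_limUnder ⟨w, hw⟩
  have memBound : ∀ (g : Y → ℂ), MemAu Y g → ∃ M, (∀ y ∈ ball (0:Y) 1, ‖g y‖ ≤ M) :=
    fun g hg => hg.2.1
  refine ⟨⟨G, ?_, ?_, ?_, ?_, ?_, ?_⟩, ?_, ?_⟩
  · -- congr'
    intro g g' hg hg' heq
    obtain ⟨M, hM⟩ := memBound g hg
    have t1 := keyA g M hM
    have t2 : Tendsto (fun x => g' (Φ x)) (u : Filter X) (𝓝 (G g)) := by
      refine t1.congr' ?_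
      filter_upwards [hevu] with x hx
      exact heq _ (hΦball x hx)
    exact (t2.limUnder_eq).symm
  · -- map_add'
    intro g g' hg hg'
    obtain ⟨M, hM⟩ := memBound g hg
    obtain ⟨M', hM'⟩ := memBound g' hg'
    exact ((keyA g M hM).add (keyA g' M' hM')).limUnder_eq
  · -- map_mul'
    intro g g' hg hg'
    obtain ⟨M, hM⟩ := memBound g hg
    obtain ⟨M', hM'⟩ := memBound g' hg'
    exact ((keyA g M hM).mul (keyA g' M' hM')).limUnder_eq
  · -- map_smul'
    intro a g hg
    obtain ⟨M, hM⟩ := memBound g hg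
    exact ((keyA g M hM).const_mul a).limUnder_eq
  · -- map_one'
    exact (tendsto_const_nhds (x := (1:ℂ)) (f := (u : Filter X))).limUnder_eq
  · -- continuous'
    refine ⟨1, fun g M hg hM => ?_⟩
    have t := keyA g M hM
    have hbd : ∀ᶠ x in (u : Filter X), ‖g (Φ x)‖ ≤ M := by
      filter_upwards [hevu] with x hx
      exact hM _ (hΦball x hx)
    have := le_of_tendsto t.norm hbd
    simpa using this
  · -- inFiberZero
    intro φ
    have hψ : Tendsto (fun x => (φ.comp π) x) l (𝓝 0) := hweak _
    have t : Tendsto (fun x => φ (Φ x)) (u : Filter X) (𝓝 0) := by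
      have heq : ∀ x, φ (Φ x) = c x * φ (π x) := by
        intro x
        simp [Φ, map_smul, smul_eq_mul]
      have : Tendsto (fun x => c x * φ (π x)) l (𝓝 (1 * 0)) := hc1.mul hψ
      rw [one_mul] at this
      exact ((this.congr (fun x => (heq x).symm)).mono_left hu)
    exact t.limUnder_eq
  · -- value at f
    have hUC := hf.2.2
    rw [Metric.uniformContinuousOn_iff] at hUC
    have t : Tendsto (fun x => f ↑(Φ x)) (u : Filter X) (𝓝 z) := by
      refine Tendsto.mono_left ?_ hu
      rw [Metric.tendsto_nhds]
      intro ε hε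
      obtain ⟨δ, hδ, H⟩ := hUC (ε/2) (by linarith)
      have hnear : ∀ᶠ x in l, ‖((Φ x : X)) - x‖ < δ := by
        have := hΦx.norm
        rw [Metric.tendsto_nhds] at this
        have h := this δ hδ
        simpa [dist_eq_norm] using h
      have hdz : ∀ᶠ x in l, dist (f x) z < ε/2 := by
        rw [Metric.tendsto_nhds] at hfz
        exact hfz (ε/2) (by linarith)
      filter_upwards [hev, hnear, hdz] with x hx h1 h2
      have hΦb : ((Φ x : X)) ∈ ball (0:X) 1 := by
        have := hΦball x hx
        rw [mem_ball_zero_iff] at this ⊢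
        simpa using this
      have hd : dist ((Φ x : X)) x < δ := by rwa [dist_eq_norm]
      have := H _ hΦb _ hx hd
      calc dist (f ↑(Φ x)) z ≤ dist (f ↑(Φ x)) (f x) + dist (f x) z := dist_triangle _ _ _
        _ < ε/2 + ε/2 := add_lt_add this h2
        _ = ε := by ring
    exact t.limUnder_eq


end CVAux

open Metric Filter Topology ClusterValue in
/-- For every Banach space `X` and `f ∈ A_u(B)`, the cluster set of `f` at `0` equals the
intersection over all closed finite-codimensional subspaces `Y ⊆ X` of the images
`(f|_{B_Y})^(M₀(B_Y))` of the fibers at `0` under the Gelfand transform of the restriction. -/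
theorem statement5 {X : Type*} [NormedAddCommGroup X] [NormedSpace ℂ X]
    (f : X → ℂ) (hf : MemAu X f) :
    clusterSetZero X f =
      ⋂ (Y : Submodule ℂ X) (_ : IsClosed (Y : Set X)) (_ : FiniteDimensional ℂ (X ⧸ Y)),
        {z | ∃ τ : Character ↥Y (MemAu ↥Y), τ.inFiberZero ∧ τ.toFun (fun y => f ↑y) = z} := by
  ext z
  simp only [Set.mem_iInter, Set.mem_setOf_eq]
  constructor
  · -- cluster value gives characters on every finite-codimensional subspace
    rintro ⟨l, hne, hball, hweak, hfz⟩ Y hYc hYfd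
    exact CVAux.exists_char Y hYc hf hne hball hweak hfz
  · -- characters on every finite-codimensional subspace give a cluster value
    intro hz
    classical
    haveI : Nonempty X := ⟨0⟩
    set A : Finset (X →L[ℂ] ℂ) × {ε : ℝ // 0 < ε} → Set X := fun p =>
      {x | x ∈ ball (0 : X) 1 ∧ (∀ φ ∈ p.1, φ x = 0) ∧ dist (f x) z < (p.2 : ℝ)} with hA
    have hAnon : ∀ p, (A p).Nonempty := by
      rintro ⟨F, ε, hε⟩
      let Λ : X →L[ℂ] (↥F → ℂ) := ContinuousLinearMap.pi (fun φ : ↥F => (φ : X →L[ℂ] ℂ))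
      set Y : Submodule ℂ X := LinearMap.ker (Λ : X →ₗ[ℂ] (↥F → ℂ)) with hYdef
      have hYc : IsClosed (Y : Set X) := ContinuousLinearMap.isClosed_ker Λ
      haveI hYfd : FiniteDimensional ℂ (X ⧸ Y) := by
        have e := (Λ : X →ₗ[ℂ] (↥F → ℂ)).quotKerEquivRange
        exact FiniteDimensional.of_injective e.toLinearMap e.injective
      obtain ⟨τ, hτ0, hτf⟩ := hz Y hYc hYfd
      have hgmem : MemAu ↥Y (fun y : ↥Y => f ↑y) := CVAux.memAu_restrict Y hf
      have hcl : z ∈ closure ((fun y : ↥Y => f ↑y) '' ball (0 : ↥Y) 1) := by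
        rw [← hτf]
        exact CVAux.char_mem_closure hgmem τ
      rw [Metric.mem_closure_iff] at hcl
      obtain ⟨w, ⟨y, hy, rfl⟩, hd⟩ := hcl ε hε
      refine ⟨↑y, ?_, ?_, ?_⟩
      · rw [mem_ball_zero_iff] at hy ⊢
        simpa using hy
      · intro φ hφ
        have h0 : Λ ↑y = 0 := LinearMap.mem_ker.mp y.2
        have := congrFun h0 ⟨φ, hφ⟩
        simpa [Λ, ContinuousLinearMap.pi_apply] using this
      · rw [dist_comm] at hd
        exact hd
    set l : Filter X := ⨅ p, 𝓟 (A p) with hl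
    have hdir : Directed (fun x1 x2 => x1 ≥ x2) (fun p => 𝓟 (A p)) := by
      rintro ⟨F₁, ε₁⟩ ⟨F₂, ε₂⟩
      refine ⟨(F₁ ∪ F₂, ⟨min ε₁ ε₂, lt_min ε₁.2 ε₂.2⟩), ?_, ?_⟩
      · refine principal_mono.mpr ?_
        rintro x ⟨hx1, hx2, hx3⟩
        exact ⟨hx1, fun φ hφ => hx2 φ (Finset.mem_union_left _ hφ),
          hx3.trans_le (min_le_left _ _)⟩
      · refine principal_mono.mpr ?_
        rintro x ⟨hx1, hx2, hx3⟩
        exact ⟨hx1, fun φ hφ => hx2 φ (Finset.mem_union_right _ hφ),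
          hx3.trans_le (min_le_right _ _)⟩
    haveI hlne : l.NeBot := by
      refine Filter.iInf_neBot_of_directed hdir (fun p => ?_)
      exact Filter.principal_neBot_iff.mpr (hAnon p)
    have hmemA : ∀ p, A p ∈ l := fun p => Filter.mem_iInf_of_mem p (mem_principal_self _)
    refine ⟨l, hlne, ?_, ?_, ?_⟩
    · refine le_trans (iInf_le _ (∅, ⟨1, one_pos⟩)) (principal_mono.mpr ?_)
      rintro x ⟨hx1, _, _⟩
      exact hx1
    · intro φ
      have hAφ := hmemA ({φ}, ⟨1, one_pos⟩)
      refine Filter.Tendsto.congr' ?_ (tendsto_const_nhds (x := (0:ℂ)))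
      filter_upwards [hAφ] with x hx
      exact (hx.2.1 φ (Finset.mem_singleton_self φ)).symm
    · rw [Metric.tendsto_nhds]
      intro ε hε
      filter_upwards [hmemA (∅, ⟨ε, hε⟩)] with x hx
      exact hx.2.2
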